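/- Let G be a maximally independent graph of type 3 possessing a vertex v of degree 3. Then there exists a maximally independent graph G' of type 3 and a Henneberg 2 move G' → G whose new vertex is v (that is, G is obtained from G' by a Henneberg 2 move). -/

import Mathlib

open SimpleGraph

noncomputable section

/-- The freedom number `f(H) = 2|V(H)| - |E(H)|` of a subgraph. -/
def subFreedom {V : Type} {G : SimpleGraph V} (H : G.Subgraph) : ℤ :=
  2 * (H.verts.ncard : ℤ) - (H.edgeSet.ncard : ℤ)

/-- The freedom number `f(G) = 2|V| - |E|` of a graph. -/
def gFreedom {V : Type} (G : SimpleGraph V) : ℤ :=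
  2 * ((Set.univ : Set V).ncard : ℤ) - (G.edgeSet.ncard : ℤ)

/-- `G` is independent of type 2: every subgraph (with nonempty vertex set)
has freedom number at least 2. -/
def Indep2 {V : Type} (G : SimpleGraph V) : Prop :=
  ∀ H : G.Subgraph, H.verts.Nonempty → 2 ≤ subFreedom H

/-- `G` is maximally independent of type 2. -/
def MaxIndep2 {V : Type} (G : SimpleGraph V) : Prop := Indep2 G ∧ gFreedom G = 2

/-- `G` is independent of type 3: every subgraph with at least one edge
has freedom number at least 3. -/
def Indep3 {V : Type} (G : SimpleGraph V) : Prop :=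
  ∀ H : G.Subgraph, H.edgeSet.Nonempty → 3 ≤ subFreedom H

/-- `G` is maximally independent of type 3. -/
def MaxIndep3 {V : Type} (G : SimpleGraph V) : Prop := Indep3 G ∧ gFreedom G = 3

/-- A Laman graph: connected and maximally independent of type 3. -/
def Laman {V : Type} (G : SimpleGraph V) : Prop := G.Connected ∧ MaxIndep3 G

/-- Henneberg 1 move: `G'` (on vertex type `β`) is obtained from `G` (on `α`)
via the vertex embedding `φ` by adjoining the new vertex `w` joined to the images
of two distinct vertices `a`, `b` of `G`. -/
def Henneberg1Rel {α β : Type} (G : SimpleGraph α) (G' : SimpleGraph β)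
    (φ : α ↪ β) (w : β) : Prop :=
  (∀ y : β, y ∈ Set.range φ ∨ y = w) ∧ w ∉ Set.range φ ∧
  ∃ a b : α, a ≠ b ∧
    ∀ x y : β, G'.Adj x y ↔
      ((∃ c d : α, G.Adj c d ∧ x = φ c ∧ y = φ d) ∨
       (x = w ∧ (y = φ a ∨ y = φ b)) ∨ (y = w ∧ (x = φ a ∨ x = φ b)))

/-- Henneberg 2 move: `G'` is obtained from `G` by breaking the edge `(u,v)` of `G`
at the new vertex `w` and adding an edge from `w` to a third vertex `z`. -/
def Henneberg2Rel {α β : Type} (G : SimpleGraph α) (G' : SimpleGraph β)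
    (φ : α ↪ β) (w : β) : Prop :=
  (∀ y : β, y ∈ Set.range φ ∨ y = w) ∧ w ∉ Set.range φ ∧
  ∃ u v z : α, G.Adj u v ∧ z ≠ u ∧ z ≠ v ∧
    ∀ x y : β, G'.Adj x y ↔
      ((∃ a b : α, G.Adj a b ∧ ¬ (s(a, b) = s(u, v)) ∧ x = φ a ∧ y = φ b) ∨
       (x = w ∧ (y = φ u ∨ y = φ v ∨ y = φ z)) ∨
       (y = w ∧ (x = φ u ∨ x = φ v ∨ x = φ z)))

def finCastSuccEmb (n : ℕ) : Fin n ↪ Fin (n + 1) :=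
  ⟨Fin.castSucc, Fin.castSucc_injective n⟩

/-- `Derived G0 n G` : the graph `G` on `Fin n` is obtained from the base graph `G0`
by a finite sequence of Henneberg 1 and Henneberg 2 moves. -/
inductive Derived {m : ℕ} (G0 : SimpleGraph (Fin m)) : (n : ℕ) → SimpleGraph (Fin n) → Prop
  | base : Derived G0 m G0
  | h1 {n : ℕ} {G : SimpleGraph (Fin n)} {G' : SimpleGraph (Fin (n + 1))} :
      Derived G0 n G → Henneberg1Rel G G' (finCastSuccEmb n) (Fin.last n) →
      Derived G0 (n + 1) G'
  | h2 {n : ℕ} {G : SimpleGraph (Fin n)} {G' : SimpleGraph (Fin (n + 1))} :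
      Derived G0 n G → Henneberg2Rel G G' (finCastSuccEmb n) (Fin.last n) →
      Derived G0 (n + 1) G'

namespace RevH2

variable {V : Type} [Fintype V] {G : SimpleGraph V}

lemma subFreedom_sup_add_inf (H1 H2 : G.Subgraph) :
    subFreedom (H1 ⊔ H2) + subFreedom (H1 ⊓ H2) = subFreedom H1 + subFreedom H2 := by
  unfold subFreedom
  rw [Subgraph.verts_sup, Subgraph.verts_inf, Subgraph.edgeSet_sup, Subgraph.edgeSet_inf]
  have h1 := Set.ncard_union_add_ncard_inter H1.verts H2.verts (Set.toFinite _) (Set.toFinite _)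
  have h2 := Set.ncard_union_add_ncard_inter H1.edgeSet H2.edgeSet (Set.toFinite _) (Set.toFinite _)
  zify at h1 h2
  linarith

/-- The subgraph obtained from `U` by gluing back the degree-3 vertex `v`. -/
def extSub (U : G.Subgraph) (v a b c : V) (hva : G.Adj v a) (hvb : G.Adj v b) (hvc : G.Adj v c)
    (haU : a ∈ U.verts) (hbU : b ∈ U.verts) (hcU : c ∈ U.verts) : G.Subgraph where
  verts := insert v U.verts
  Adj p q := U.Adj p q ∨ (p = v ∧ (q = a ∨ q = b ∨ q = c)) ∨ (q = v ∧ (p = a ∨ p = b ∨ p = c))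
  adj_sub := by
    rintro p q (h | ⟨rfl, rfl | rfl | rfl⟩ | ⟨rfl, rfl | rfl | rfl⟩)
    · exact U.adj_sub h
    · exact hva
    · exact hvb
    · exact hvc
    · exact hva.symm
    · exact hvb.symm
    · exact hvc.symm
  edge_vert := by
    rintro p q (h | ⟨rfl, _⟩ | ⟨rfl, rfl | rfl | rfl⟩)
    · exact Set.mem_insert_of_mem _ (U.edge_vert h)
    · exact Set.mem_insert _ _
    · exact Set.mem_insert_of_mem _ haU
    · exact Set.mem_insert_of_mem _ hbU
    · exact Set.mem_insert_of_mem _ hcU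
  symm := by
    constructor
    rintro p q (h | h | h)
    · exact Or.inl (U.adj_symm h)
    · exact Or.inr (Or.inr h)
    · exact Or.inr (Or.inl h)

lemma no_tight (hI : Indep3 G) {v a b c : V}
    (hab : a ≠ b) (hac : a ≠ c) (hbc : b ≠ c)
    (hva : G.Adj v a) (hvb : G.Adj v b) (hvc : G.Adj v c)
    (U : G.Subgraph) (hvU : v ∉ U.verts) (haU : a ∈ U.verts) (hbU : b ∈ U.verts)
    (hcU : c ∈ U.verts) : subFreedom U ≠ 3 := by
  intro hU3
  let H : G.Subgraph := extSub U v a b c hva hvb hvc haU hbU hcU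
  have hAdj : ∀ p q, H.Adj p q ↔
      (U.Adj p q ∨ (p = v ∧ (q = a ∨ q = b ∨ q = c)) ∨ (q = v ∧ (p = a ∨ p = b ∨ p = c))) :=
    fun p q => Iff.rfl
  have hVne : a ≠ v := fun h => G.irrefl (h ▸ hva)
  have hBne : b ≠ v := fun h => G.irrefl (h ▸ hvb)
  have hCne : c ≠ v := fun h => G.irrefl (h ▸ hvc)
  have hnoU : ∀ w, ¬ U.Adj v w := fun w h => hvU (U.edge_vert h)
  have hnoU' : ∀ w, ¬ U.Adj w v := fun w h => hvU (U.edge_vert h.symm)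
  have hE : H.edgeSet = U.edgeSet ∪ {s(v,a), s(v,b), s(v,c)} := by
    ext e
    refine Sym2.ind (fun p q => ?_) e
    rw [Subgraph.mem_edgeSet, hAdj]
    simp only [Set.mem_union, Set.mem_insert_iff, Set.mem_singleton_iff, Sym2.eq_iff,
      Subgraph.mem_edgeSet]
    constructor
    · rintro (h | ⟨rfl, h⟩ | ⟨rfl, h⟩) <;> tauto
    · rintro (h | h | h | h)
      · exact Or.inl h
      · rcases h with ⟨rfl, rfl⟩ | ⟨rfl, rfl⟩ <;> tauto
      · rcases h with ⟨rfl, rfl⟩ | ⟨rfl, rfl⟩ <;> tauto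
      · rcases h with ⟨rfl, rfl⟩ | ⟨rfl, rfl⟩ <;> tauto
  have hVerts : H.verts = insert v U.verts := rfl
  have hdisj : Disjoint U.edgeSet {s(v,a), s(v,b), s(v,c)} := by
    rw [Set.disjoint_right]
    rintro e (rfl | rfl | rfl) he <;>
      exact (hnoU _) (Subgraph.mem_edgeSet.1 he)
  have hc3 : ({s(v,a), s(v,b), s(v,c)} : Set (Sym2 V)).ncard = 3 := by
    have h1 : s(v,a) ∉ ({s(v,b), s(v,c)} : Set (Sym2 V)) := by
      simp only [Set.mem_insert_iff, Set.mem_singleton_iff, Sym2.eq_iff]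
      rintro ((⟨-, h⟩ | ⟨h, -⟩) | (⟨-, h⟩ | ⟨h, -⟩))
      exacts [hab h, hBne h.symm, hac h, hCne h.symm]
    have h2 : s(v,b) ≠ s(v,c) := by
      simp only [Ne, Sym2.eq_iff]
      rintro (⟨-, h⟩ | ⟨h, -⟩)
      exacts [hbc h, hCne h.symm]
    rw [Set.ncard_insert_of_notMem h1, Set.ncard_pair h2]
  have hEcard : H.edgeSet.ncard = U.edgeSet.ncard + 3 := by
    rw [hE, Set.ncard_union_eq hdisj (Set.toFinite _) (Set.toFinite _), hc3]
  have hVcard : H.verts.ncard = U.verts.ncard + 1 := by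
    rw [hVerts, Set.ncard_insert_of_notMem hvU]
  have hH3 := hI H ⟨s(v,a), by rw [hE]; right; simp⟩
  unfold subFreedom at hH3 hU3
  rw [hEcard, hVcard] at hH3
  push_cast at hH3 hU3
  linarith


/-- There is a "tight" subgraph avoiding `v` and containing `x` and `y`. -/
def Bad (G : SimpleGraph V) (v x y : V) : Prop :=
  ∃ B : G.Subgraph, v ∉ B.verts ∧ x ∈ B.verts ∧ y ∈ B.verts ∧
    B.edgeSet.Nonempty ∧ subFreedom B = 3

lemma bad_of_adj {v x y : V} (h : G.Adj x y) (hx : x ≠ v) (hy : y ≠ v) : Bad G v x y := by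
  refine ⟨G.subgraphOfAdj h, ?_, ?_, ?_, ⟨s(x,y), by simp⟩, ?_⟩
  · simp only [subgraphOfAdj_verts, Set.mem_insert_iff, Set.mem_singleton_iff]
    rintro (rfl | rfl)
    exacts [hx rfl, hy rfl]
  · simp
  · simp
  · unfold subFreedom
    rw [SimpleGraph.edgeSet_subgraphOfAdj]
    simp only [subgraphOfAdj_verts]
    rw [Set.ncard_pair h.ne, Set.ncard_singleton]
    norm_num

lemma inter_small (hI : Indep3 G) {v a b c : V}
    (hab : a ≠ b) (hac : a ≠ c) (hbc : b ≠ c)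
    (hva : G.Adj v a) (hvb : G.Adj v b) (hvc : G.Adj v c)
    {B B' : G.Subgraph} (hBf : subFreedom B = 3) (hB'f : subFreedom B' = 3)
    (hBe : B.edgeSet.Nonempty)
    (hvs : v ∉ (B ⊔ B').verts) (has : a ∈ (B ⊔ B').verts) (hbs : b ∈ (B ⊔ B').verts)
    (hcs : c ∈ (B ⊔ B').verts)
    {w : V} (hw : w ∈ (B ⊓ B').verts) :
    (B ⊓ B').verts = {w} ∧ (B ⊓ B').edgeSet = ∅ := by
  have hsupE : (B ⊔ B').edgeSet.Nonempty := by
    obtain ⟨e, he⟩ := hBe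
    exact ⟨e, by rw [Subgraph.edgeSet_sup]; exact Or.inl he⟩
  have hsup3 : 3 ≤ subFreedom (B ⊔ B') := hI _ hsupE
  have hiden := subFreedom_sup_add_inf B B'
  have hinf3 : subFreedom (B ⊓ B') ≤ 3 := by linarith
  by_cases hie : (B ⊓ B').edgeSet.Nonempty
  · exfalso
    have hi3 : 3 ≤ subFreedom (B ⊓ B') := hI _ hie
    have : subFreedom (B ⊔ B') = 3 := by linarith
    exact no_tight hI hab hac hbc hva hvb hvc _ hvs has hbs hcs this
  · have hieq : (B ⊓ B').edgeSet = ∅ := Set.not_nonempty_iff_eq_empty.1 hie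
    have hcard0 : (B ⊓ B').edgeSet.ncard = 0 := by rw [hieq]; simp
    have hle1 : (B ⊓ B').verts.ncard ≤ 1 := by
      unfold subFreedom at hinf3
      rw [hcard0] at hinf3
      push_cast at hinf3
      omega
    have h1 : (B ⊓ B').verts.ncard = 1 := by
      have : 0 < (B ⊓ B').verts.ncard := (Set.ncard_pos (Set.toFinite _)).2 ⟨w, hw⟩
      omega
    obtain ⟨u, hu⟩ := Set.ncard_eq_one.1 h1
    rw [hu] at hw
    rw [Set.mem_singleton_iff] at hw
    subst hw
    exact ⟨hu, hieq⟩

lemma not_all_bad (hI : Indep3 G) {v a b c : V}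
    (hab : a ≠ b) (hac : a ≠ c) (hbc : b ≠ c)
    (hva : G.Adj v a) (hvb : G.Adj v b) (hvc : G.Adj v c) :
    ¬ (Bad G v a b ∧ Bad G v b c ∧ Bad G v a c) := by
  rintro ⟨⟨B1, h1v, h1a, h1b, h1e, h1f⟩, ⟨B2, h2v, h2b, h2c, h2e, h2f⟩,
    ⟨B3, h3v, h3a, h3c, h3e, h3f⟩⟩
  -- pairwise intersections
  have m12 : b ∈ (B1 ⊓ B2).verts := by rw [Subgraph.verts_inf]; exact ⟨h1b, h2b⟩
  have m13 : a ∈ (B1 ⊓ B3).verts := by rw [Subgraph.verts_inf]; exact ⟨h1a, h3a⟩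
  have m23 : c ∈ (B2 ⊓ B3).verts := by rw [Subgraph.verts_inf]; exact ⟨h2c, h3c⟩
  have hv12 : v ∉ (B1 ⊔ B2).verts := by
    rw [Subgraph.verts_sup]; rintro (h | h); exacts [h1v h, h2v h]
  have hv13 : v ∉ (B1 ⊔ B3).verts := by
    rw [Subgraph.verts_sup]; rintro (h | h); exacts [h1v h, h3v h]
  have hv23 : v ∉ (B2 ⊔ B3).verts := by
    rw [Subgraph.verts_sup]; rintro (h | h); exacts [h2v h, h3v h]
  have I12 := inter_small hI hab hac hbc hva hvb hvc h1f h2f h1e hv12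
    (by rw [Subgraph.verts_sup]; exact Or.inl h1a)
    (by rw [Subgraph.verts_sup]; exact Or.inl h1b)
    (by rw [Subgraph.verts_sup]; exact Or.inr h2c) m12
  have I13 := inter_small hI hab hac hbc hva hvb hvc h1f h3f h1e hv13
    (by rw [Subgraph.verts_sup]; exact Or.inl h1a)
    (by rw [Subgraph.verts_sup]; exact Or.inl h1b)
    (by rw [Subgraph.verts_sup]; exact Or.inr h3c) m13
  have I23 := inter_small hI hab hac hbc hva hvb hvc h2f h3f h2e hv23
    (by rw [Subgraph.verts_sup]; exact Or.inr h3a)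
    (by rw [Subgraph.verts_sup]; exact Or.inl h2b)
    (by rw [Subgraph.verts_sup]; exact Or.inl h2c) m23
  -- freedom of B1 ⊔ B2
  have f12inf : subFreedom (B1 ⊓ B2) = 2 := by
    unfold subFreedom
    rw [I12.1, I12.2]
    simp
  have f12 : subFreedom (B1 ⊔ B2) = 4 := by
    have := subFreedom_sup_add_inf B1 B2
    linarith
  -- the middle graph M = (B1 ⊔ B2) ⊓ B3
  have hMv : ((B1 ⊔ B2) ⊓ B3).verts = {a, c} := by
    rw [Subgraph.verts_inf, Subgraph.verts_sup, Set.union_inter_distrib_right,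
      ← Subgraph.verts_inf, ← Subgraph.verts_inf, I13.1, I23.1]
    rfl
  have hMe : ((B1 ⊔ B2) ⊓ B3).edgeSet = ∅ := by
    rw [Subgraph.edgeSet_inf, Subgraph.edgeSet_sup, Set.union_inter_distrib_right,
      ← Subgraph.edgeSet_inf, ← Subgraph.edgeSet_inf, I13.2, I23.2]
    simp
  have fM : subFreedom ((B1 ⊔ B2) ⊓ B3) = 4 := by
    unfold subFreedom
    rw [hMv, hMe, Set.ncard_pair hac]
    simp
  have fU : subFreedom ((B1 ⊔ B2) ⊔ B3) = 3 := by
    have := subFreedom_sup_add_inf (B1 ⊔ B2) B3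
    linarith
  refine no_tight hI hab hac hbc hva hvb hvc ((B1 ⊔ B2) ⊔ B3) ?_ ?_ ?_ ?_ fU
  · rw [Subgraph.verts_sup]; rintro (h | h); exacts [hv12 h, h3v h]
  · rw [Subgraph.verts_sup]; exact Or.inl (by rw [Subgraph.verts_sup]; exact Or.inl h1a)
  · rw [Subgraph.verts_sup]; exact Or.inl (by rw [Subgraph.verts_sup]; exact Or.inl h1b)
  · rw [Subgraph.verts_sup]; exact Or.inr h3c



variable {v : V}

/-- Push a subgraph of the modified graph `G'` back to a subgraph of `G`,
dropping the new edge `xy`. -/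
def push (G' : SimpleGraph {u : V // u ≠ v}) (x y : V)
    (hsub : ∀ p q : {u : V // u ≠ v}, G'.Adj p q →
      (G.Adj ↑p ↑q ∨ ((p : V) = x ∧ (q : V) = y) ∨ ((p : V) = y ∧ (q : V) = x)))
    (H' : G'.Subgraph) : G.Subgraph where
  verts := Subtype.val '' H'.verts
  Adj p q := ∃ (hp : p ≠ v) (hq : q ≠ v),
    H'.Adj ⟨p, hp⟩ ⟨q, hq⟩ ∧ ¬((p = x ∧ q = y) ∨ (p = y ∧ q = x))
  adj_sub := by
    rintro p q ⟨hp, hq, hA, hne⟩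
    rcases hsub _ _ (H'.adj_sub hA) with h | h | h
    · exact h
    · exact absurd (Or.inl h) hne
    · exact absurd (Or.inr h) hne
  edge_vert := by
    rintro p q ⟨hp, hq, hA, -⟩
    exact ⟨⟨p, hp⟩, H'.edge_vert hA, rfl⟩
  symm := by
    constructor
    rintro p q ⟨hp, hq, hA, hne⟩
    exact ⟨hq, hp, hA.symm, fun h => hne (by tauto)⟩

lemma push_edgeSet {G' : SimpleGraph {u : V // u ≠ v}} {x y : V} (hx : x ≠ v) (hy : y ≠ v)
    (hsub : ∀ p q : {u : V // u ≠ v}, G'.Adj p q →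
      (G.Adj ↑p ↑q ∨ ((p : V) = x ∧ (q : V) = y) ∨ ((p : V) = y ∧ (q : V) = x)))
    (H' : G'.Subgraph) :
    (push G' x y hsub H').edgeSet
      = Sym2.map Subtype.val '' (H'.edgeSet \ {s(⟨x, hx⟩, ⟨y, hy⟩)}) := by
  ext e
  refine Sym2.ind (fun p q => ?_) e
  rw [Subgraph.mem_edgeSet]
  constructor
  · rintro ⟨hp, hq, hA, hne⟩
    refine ⟨s(⟨p, hp⟩, ⟨q, hq⟩), ⟨hA, ?_⟩, by rw [Sym2.map_pair_eq]⟩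
    simp only [Set.mem_singleton_iff, Sym2.eq_iff, Subtype.mk.injEq]
    exact hne
  · rintro ⟨e', ⟨he', hne'⟩, hmap⟩
    rw [Set.mem_singleton_iff] at hne'
    induction e' using Sym2.ind with
    | _ α β =>
      rw [Sym2.map_pair_eq, Sym2.eq_iff] at hmap
      have hA : H'.Adj α β := he'
      rcases hmap with ⟨h1, h2⟩ | ⟨h1, h2⟩
      · subst h1; subst h2
        refine ⟨α.2, β.2, hA, ?_⟩
        rintro (⟨h3, h4⟩ | ⟨h3, h4⟩) <;> apply hne' <;> rw [Sym2.eq_iff] <;>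
          first
            | exact Or.inl ⟨Subtype.ext h3, Subtype.ext h4⟩
            | exact Or.inl ⟨Subtype.ext h4, Subtype.ext h3⟩
            | exact Or.inr ⟨Subtype.ext h3, Subtype.ext h4⟩
            | exact Or.inr ⟨Subtype.ext h4, Subtype.ext h3⟩
      · subst h1; subst h2
        refine ⟨β.2, α.2, hA.symm, ?_⟩
        rintro (⟨h3, h4⟩ | ⟨h3, h4⟩) <;> apply hne' <;> rw [Sym2.eq_iff] <;>
          first
            | exact Or.inl ⟨Subtype.ext h3, Subtype.ext h4⟩
            | exact Or.inl ⟨Subtype.ext h4, Subtype.ext h3⟩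
            | exact Or.inr ⟨Subtype.ext h3, Subtype.ext h4⟩
            | exact Or.inr ⟨Subtype.ext h4, Subtype.ext h3⟩


lemma construct (hG : MaxIndep3 G) {v x y z : V} (hN : G.neighborSet v = {x, y, z})
    (hxy : x ≠ y) (hxz : x ≠ z) (hyz : y ≠ z) (hbad : ¬ Bad G v x y) :
    ∃ G' : SimpleGraph {u : V // u ≠ v}, MaxIndep3 G' ∧
      Henneberg2Rel G' G (Function.Embedding.subtype (· ≠ v)) v := by
  classical
  obtain ⟨hI, hF⟩ := hG
  have hvx : G.Adj v x := by
    have : x ∈ G.neighborSet v := by rw [hN]; simp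
    exact this
  have hvy : G.Adj v y := by
    have : y ∈ G.neighborSet v := by rw [hN]; simp
    exact this
  have hvz : G.Adj v z := by
    have : z ∈ G.neighborSet v := by rw [hN]; simp
    exact this
  have hx : x ≠ v := hvx.ne'
  have hy : y ≠ v := hvy.ne'
  have hz : z ≠ v := hvz.ne'
  have hnadj : ¬ G.Adj x y := fun h => hbad (bad_of_adj h hx hy)
  let G' : SimpleGraph {u : V // u ≠ v} :=
    { Adj := fun p q => G.Adj ↑p ↑q ∨ ((p : V) = x ∧ (q : V) = y) ∨ ((p : V) = y ∧ (q : V) = x)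
      symm := by
        constructor
        rintro p q (h | ⟨h1, h2⟩ | ⟨h1, h2⟩)
        · exact Or.inl h.symm
        · exact Or.inr (Or.inr ⟨h2, h1⟩)
        · exact Or.inr (Or.inl ⟨h2, h1⟩)
      loopless := by
        constructor
        rintro p (h | ⟨h1, h2⟩ | ⟨h1, h2⟩)
        · exact G.irrefl h
        · exact hxy (h1.symm.trans h2)
        · exact hxy (h2.symm.trans h1) }
  have hG'Adj : ∀ p q : {u : V // u ≠ v}, G'.Adj p q ↔
      (G.Adj ↑p ↑q ∨ ((p : V) = x ∧ (q : V) = y) ∨ ((p : V) = y ∧ (q : V) = x)) :=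
    fun p q => Iff.rfl
  have hsub : ∀ p q : {u : V // u ≠ v}, G'.Adj p q →
      (G.Adj ↑p ↑q ∨ ((p : V) = x ∧ (q : V) = y) ∨ ((p : V) = y ∧ (q : V) = x)) :=
    fun p q h => (hG'Adj p q).1 h
  have hvalinj : Function.Injective (Subtype.val : {u : V // u ≠ v} → V) :=
    Subtype.val_injective
  have hEinj : Function.Injective (Sym2.map (Subtype.val : {u : V // u ≠ v} → V)) :=
    Sym2.map.injective hvalinj
  -- Indep3 for G'
  have hI' : Indep3 G' := by
    intro H' hH'e
    let H : G.Subgraph := push G' x y hsub H'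
    have hHverts : H.verts = Subtype.val '' H'.verts := rfl
    have hHe : H.edgeSet = Sym2.map Subtype.val '' (H'.edgeSet \ {s(⟨x, hx⟩, ⟨y, hy⟩)}) :=
      push_edgeSet hx hy hsub H'
    have hvH : v ∉ H.verts := by
      rintro ⟨⟨u, hu⟩, -, h⟩
      exact hu h
    have hVcard : H.verts.ncard = H'.verts.ncard := by
      rw [hHverts, Set.ncard_image_of_injective _ hvalinj]
    by_cases hmem : s(⟨x, hx⟩, ⟨y, hy⟩) ∈ H'.edgeSet
    · have hEcard : H.edgeSet.ncard + 1 = H'.edgeSet.ncard := by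
        rw [hHe, Set.ncard_image_of_injective _ hEinj]
        exact Set.ncard_diff_singleton_add_one hmem (Set.toFinite _)
      have hAxy : H'.Adj ⟨x, hx⟩ ⟨y, hy⟩ := Subgraph.mem_edgeSet.1 hmem
      have hxH : x ∈ H.verts := ⟨⟨x, hx⟩, H'.edge_vert hAxy, rfl⟩
      have hyH : y ∈ H.verts := ⟨⟨y, hy⟩, H'.edge_vert hAxy.symm, rfl⟩
      by_cases hHne : H.edgeSet.Nonempty
      · have h3 : 3 ≤ subFreedom H := hI H hHne
        have hne3 : subFreedom H ≠ 3 := fun h => hbad ⟨H, hvH, hxH, hyH, hHne, h⟩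
        have h4 : 4 ≤ subFreedom H := by omega
        unfold subFreedom at h4 ⊢
        rw [hVcard] at h4
        have he : (H.edgeSet.ncard : ℤ) + 1 = (H'.edgeSet.ncard : ℤ) := by
          exact_mod_cast hEcard
        linarith
      · have hHempty : H.edgeSet = ∅ := Set.not_nonempty_iff_eq_empty.1 hHne
        have h0 : H.edgeSet.ncard = 0 := by rw [hHempty]; simp
        have h1 : H'.edgeSet.ncard = 1 := by omega
        have hsub2 : ({⟨x, hx⟩, ⟨y, hy⟩} : Set {u : V // u ≠ v}) ⊆ H'.verts := by
          rintro p (rfl | rfl)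
          exacts [H'.edge_vert hAxy, H'.edge_vert hAxy.symm]
        have hxy' : (⟨x, hx⟩ : {u : V // u ≠ v}) ≠ ⟨y, hy⟩ := by
          intro h
          exact hxy (congrArg Subtype.val h)
        have h2 : 2 ≤ H'.verts.ncard := by
          have := Set.ncard_le_ncard hsub2 (Set.toFinite _)
          rw [Set.ncard_pair hxy'] at this
          exact this
        unfold subFreedom
        rw [h1]
        push_cast
        have : (2 : ℤ) ≤ (H'.verts.ncard : ℤ) := by exact_mod_cast h2
        linarith
    · have hEcard : H.edgeSet.ncard = H'.edgeSet.ncard := by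
        rw [hHe, Set.diff_singleton_eq_self hmem, Set.ncard_image_of_injective _ hEinj]
      have hHne : H.edgeSet.Nonempty := by
        rw [hHe, Set.diff_singleton_eq_self hmem]
        exact hH'e.image _
      have h3 := hI H hHne
      unfold subFreedom at h3 ⊢
      rw [hVcard, hEcard] at h3
      exact h3
  -- gFreedom for G'
  have hEim : Sym2.map (Subtype.val : {u : V // u ≠ v} → V) '' G'.edgeSet
      = (G.edgeSet \ G.incidenceSet v) ∪ {s(x, y)} := by
    ext e
    refine Sym2.ind (fun p q => ?_) e
    constructor
    · rintro ⟨e', he', hmap⟩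
      induction e' using Sym2.ind with
      | _ α β =>
        rw [Sym2.map_pair_eq] at hmap
        rcases (hG'Adj α β).1 he' with h | ⟨h1, h2⟩ | ⟨h1, h2⟩
        · left
          rw [← hmap]
          refine ⟨h, ?_⟩
          rintro ⟨-, hv'⟩
          rw [Sym2.mem_iff] at hv'
          rcases hv' with h' | h'
          exacts [α.2 h'.symm, β.2 h'.symm]
        · right
          rw [← hmap, h1, h2]
          rfl
        · right
          rw [← hmap, h1, h2]
          exact Sym2.eq_swap
    · rintro (⟨hpq, hninc⟩ | heq)
      · rw [SimpleGraph.mem_edgeSet] at hpq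
        have hp : p ≠ v := by
          rintro rfl
          exact hninc ⟨hpq, by rw [Sym2.mem_iff]; left; rfl⟩
        have hq : q ≠ v := by
          rintro rfl
          exact hninc ⟨hpq, by rw [Sym2.mem_iff]; right; rfl⟩
        exact ⟨s(⟨p, hp⟩, ⟨q, hq⟩), (hG'Adj _ _).2 (Or.inl hpq), by rw [Sym2.map_pair_eq]⟩
      · rw [Set.mem_singleton_iff] at heq
        refine ⟨s(⟨x, hx⟩, ⟨y, hy⟩), (hG'Adj _ _).2 (Or.inr (Or.inl ⟨rfl, rfl⟩)), ?_⟩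
        rw [Sym2.map_pair_eq]
        exact heq.symm
  have hxy_notmem : s(x, y) ∉ G.edgeSet \ G.incidenceSet v := by
    rintro ⟨h, -⟩
    exact hnadj h
  have hcount1 : G'.edgeSet.ncard = (G.edgeSet \ G.incidenceSet v).ncard + 1 := by
    rw [← Set.ncard_image_of_injective _ hEinj, hEim, Set.union_singleton,
      Set.ncard_insert_of_notMem hxy_notmem]
  have hNcard : (G.neighborSet v).ncard = 3 := by
    rw [hN]
    have hxm : x ∉ ({y, z} : Set V) := by
      simp only [Set.mem_insert_iff, Set.mem_singleton_iff]
      push_neg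
      exact ⟨hxy, hxz⟩
    rw [Set.ncard_insert_of_notMem hxm, Set.ncard_pair hyz]
  have hinc3 : (G.incidenceSet v).ncard = 3 := by
    rw [← Nat.card_coe_set_eq, Nat.card_congr (G.incidenceSetEquivNeighborSet v),
      Nat.card_coe_set_eq, hNcard]
  have hcount2 : (G.edgeSet \ G.incidenceSet v).ncard + 3 = G.edgeSet.ncard := by
    rw [← hinc3]
    exact Set.ncard_diff_add_ncard_of_subset (G.incidenceSet_subset v) (Set.toFinite _)
  have hvcount : (Set.univ : Set {u : V // u ≠ v}).ncard + 1 = (Set.univ : Set V).ncard := by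
    have e1 : Nat.card {u : V // u ≠ v} = ({v}ᶜ : Set V).ncard := by
      rw [← Nat.card_coe_set_eq]
      exact Nat.card_congr (Equiv.subtypeEquivRight (fun u => by simp))
    rw [Set.ncard_univ, e1, Set.compl_eq_univ_diff]
    exact Set.ncard_diff_singleton_add_one (Set.mem_univ v) (Set.toFinite _)
  have hF' : gFreedom G' = 3 := by
    unfold gFreedom at hF ⊢
    zify at hcount1 hcount2 hvcount
    linarith
  -- Henneberg2Rel
  refine ⟨G', ⟨hI', hF'⟩, ?_, ?_, ⟨x, hx⟩, ⟨y, hy⟩, ⟨z, hz⟩,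
    (hG'Adj _ _).2 (Or.inr (Or.inl ⟨rfl, rfl⟩)), ?_, ?_, ?_⟩
  · intro w
    by_cases h : w = v
    · exact Or.inr h
    · exact Or.inl ⟨⟨w, h⟩, rfl⟩
  · rintro ⟨u, hu⟩
    simp only [Function.Embedding.coe_subtype] at hu
    exact u.2 hu
  · intro h
    exact hxz (congrArg Subtype.val h).symm
  · intro h
    exact hyz (congrArg Subtype.val h).symm
  · intro p q
    simp only [Function.Embedding.coe_subtype]
    constructor
    · intro h
      by_cases hp : p = v
      · subst hp
        refine Or.inr (Or.inl ⟨rfl, ?_⟩)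
        have : q ∈ G.neighborSet p := h
        rw [hN] at this
        rcases this with rfl | rfl | rfl
        · exact Or.inl rfl
        · exact Or.inr (Or.inl rfl)
        · exact Or.inr (Or.inr rfl)
      · by_cases hq : q = v
        · subst hq
          refine Or.inr (Or.inr ⟨rfl, ?_⟩)
          have : p ∈ G.neighborSet q := h.symm
          rw [hN] at this
          rcases this with rfl | rfl | rfl
          · exact Or.inl rfl
          · exact Or.inr (Or.inl rfl)
          · exact Or.inr (Or.inr rfl)
        · refine Or.inl ⟨⟨p, hp⟩, ⟨q, hq⟩, (hG'Adj _ _).2 (Or.inl h), ?_, rfl, rfl⟩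
          intro heq
          rw [Sym2.eq_iff] at heq
          rcases heq with ⟨h1, h2⟩ | ⟨h1, h2⟩
          · exact hnadj (by
              rw [← show (⟨p, hp⟩ : {u : V // u ≠ v}).val = p from rfl,
                ← show (⟨q, hq⟩ : {u : V // u ≠ v}).val = q from rfl, h1, h2] at h
              exact h)
          · exact hnadj (by
              rw [← show (⟨p, hp⟩ : {u : V // u ≠ v}).val = p from rfl,
                ← show (⟨q, hq⟩ : {u : V // u ≠ v}).val = q from rfl, h1, h2] at h
              exact h.symm)
    · rintro (⟨a, b, hab, hne, rfl, rfl⟩ | ⟨rfl, (rfl | rfl | rfl)⟩ | ⟨rfl, (rfl | rfl | rfl)⟩)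
      · rcases (hG'Adj a b).1 hab with h | ⟨h1, h2⟩ | ⟨h1, h2⟩
        · exact h
        · exact absurd (by rw [Sym2.eq_iff]; exact Or.inl ⟨Subtype.ext h1, Subtype.ext h2⟩) hne
        · exact absurd (by rw [Sym2.eq_iff]; exact Or.inr ⟨Subtype.ext h1, Subtype.ext h2⟩) hne
      · exact hvx
      · exact hvy
      · exact hvz
      · exact hvx.symm
      · exact hvy.symm
      · exact hvz.symm

end RevH2

/-- If `G` is maximally independent of type 3 and has a vertex `v`
of degree 3 then `G` is obtained from some maximally independent graph `G'` of
type 3 by a Henneberg 2 move with new vertex `v`. -/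
theorem reverse_henneberg2_maxIndep3 {V : Type} [Fintype V] (G : SimpleGraph V)
    (hG : MaxIndep3 G) (v : V) (hv : (G.neighborSet v).ncard = 3) :
    ∃ G' : SimpleGraph {u : V // u ≠ v}, MaxIndep3 G' ∧
      Henneberg2Rel G' G (Function.Embedding.subtype (· ≠ v)) v := by
  obtain ⟨x, y, z, hxy, hxz, hyz, hN⟩ := Set.ncard_eq_three.1 hv
  have hI := hG.1
  have hvx : G.Adj v x := by
    have : x ∈ G.neighborSet v := by rw [hN]; simp
    exact this
  have hvy : G.Adj v y := by
    have : y ∈ G.neighborSet v := by rw [hN]; simp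
    exact this
  have hvz : G.Adj v z := by
    have : z ∈ G.neighborSet v := by rw [hN]; simp
    exact this
  have hnot := RevH2.not_all_bad hI hxy hxz hyz hvx hvy hvz
  by_cases h1 : RevH2.Bad G v x y
  · by_cases h2 : RevH2.Bad G v y z
    · have h3 : ¬ RevH2.Bad G v x z := fun h => hnot ⟨h1, h2, h⟩
      have hN' : G.neighborSet v = {x, z, y} := by
        rw [hN]; ext w
        simp only [Set.mem_insert_iff, Set.mem_singleton_iff]
        tauto
      exact RevH2.construct hG hN' hxz hxy hyz.symm h3
    · have hN' : G.neighborSet v = {y, z, x} := by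
        rw [hN]; ext w
        simp only [Set.mem_insert_iff, Set.mem_singleton_iff]
        tauto
      exact RevH2.construct hG hN' hyz hxy.symm hxz.symm h2
  · exact RevH2.construct hG hN hxy hxz hyz h1
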